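/- arXiv:2401.04859 — 13 statements merged into one kernel-verified Lean document; each statement's English description precedes it below -/
import Mathlib

section
/- Let d ∈ ℕ, let F : ℝ^d × ℝ^d → ℝ^d be continuously differentiable, let y : ℝ → ℝ^d be differentiable on a neighborhood of t₀ with y'(t) = F(y(t), y(t)) there, and set y₀ = y(t₀). Suppose Y : ℝ → ℝ^d is continuous at 0, satisfies Y(0) = y₀, and satisfies the NPRK IMEX Euler equation Y(h) = y₀ + h·F(Y(h), y₀) for all h in a neighborhood of 0. Then Y(h) − y(t₀ + h) = O(h²) as h → 0, i.e., the NPRK IMEX Euler method has local truncation error of order O(h²). -/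
open Filter Topology Asymptotics

/-- The NPRK IMEX Euler method `Y(h) = y₀ + h·F(Y(h), y₀)` has local truncation error
of order `O(h²)` for the nonlinearly partitioned IVP `y' = F(y, y)`. -/
theorem nprk_imex_euler_local_truncation_error
    (d : ℕ) (F : (Fin d → ℝ) × (Fin d → ℝ) → (Fin d → ℝ))
    (hF : ContDiff ℝ 1 F)
    (t₀ : ℝ) (y : ℝ → Fin d → ℝ)
    (hy : ∀ᶠ t in 𝓝 t₀, HasDerivAt y (F (y t, y t)) t)
    (Y : ℝ → Fin d → ℝ)
    (hYc : ContinuousAt Y 0)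
    (hY0 : Y 0 = y t₀)
    (hY : ∀ᶠ h in 𝓝 (0 : ℝ), Y h = y t₀ + h • F (Y h, y t₀)) :
    (fun h : ℝ => Y h - y (t₀ + h)) =O[𝓝 (0 : ℝ)] fun h : ℝ => h ^ 2 := by
  set y₀ := y t₀ with hy₀def
  set v := F (y₀, y₀) with hvdef
  -- Lipschitz constant for F near (y₀, y₀)
  obtain ⟨K, s, hs, hKs⟩ := (hF.contDiffAt (x := (y₀, y₀))).exists_lipschitzOnWith
  have hs0 : (y₀, y₀) ∈ s := mem_of_mem_nhds hs
  -- continuity of h ↦ (Y h, y₀)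
  have hYcont : ContinuousAt (fun h : ℝ => (Y h, y₀)) 0 := hYc.prodMk continuousAt_const
  have hYcont0 : (fun h : ℝ => (Y h, y₀)) 0 = (y₀, y₀) := by simp [hY0]
  have hT : Tendsto (fun h : ℝ => (Y h, y₀)) (𝓝 0) (𝓝 (y₀, y₀)) := by
    have := hYcont
    unfold ContinuousAt at this
    rwa [hYcont0] at this
  have hmem : ∀ᶠ h in 𝓝 (0 : ℝ), (Y h, y₀) ∈ s := hT hs
  have hψ : Tendsto (fun h : ℝ => F (Y h, y₀)) (𝓝 0) (𝓝 v) :=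
    (hF.continuous.continuousAt (x := (y₀, y₀))).tendsto.comp hT
  have hbound : ∀ᶠ h in 𝓝 (0 : ℝ), ‖F (Y h, y₀)‖ ≤ ‖v‖ + 1 := by
    have := hψ.norm.eventually_le_const (by linarith [norm_nonneg v] : ‖v‖ < ‖v‖ + 1)
    exact this
  -- Part 1: explicit-implicit step error
  have hO1 : (fun h : ℝ => Y h - y₀ - h • v) =O[𝓝 (0 : ℝ)] fun h => h ^ 2 := by
    rw [isBigO_iff]
    refine ⟨K * (‖v‖ + 1), ?_⟩
    filter_upwards [hY, hmem, hbound] with h h1 h2 h3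
    have hYsub : Y h - y₀ = h • F (Y h, y₀) := by
      conv_lhs => rw [h1]
      abel
    have hstep : Y h - y₀ - h • v = h • (F (Y h, y₀) - v) := by
      rw [smul_sub, hYsub]
    have hlip : ‖F (Y h, y₀) - v‖ ≤ K * ‖Y h - y₀‖ := by
      have := hKs.dist_le_mul (Y h, y₀) h2 (y₀, y₀) hs0
      rw [Prod.dist_eq] at this
      simpa [dist_eq_norm] using this
    have hYsubnorm : ‖Y h - y₀‖ ≤ |h| * (‖v‖ + 1) := by
      rw [hYsub, norm_smul, Real.norm_eq_abs]
      exact mul_le_mul_of_nonneg_left h3 (abs_nonneg h)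
    calc ‖Y h - y₀ - h • v‖ = |h| * ‖F (Y h, y₀) - v‖ := by
          rw [hstep, norm_smul, Real.norm_eq_abs]
      _ ≤ |h| * (K * (|h| * (‖v‖ + 1))) := by
          refine mul_le_mul_of_nonneg_left (hlip.trans ?_) (abs_nonneg h)
          exact mul_le_mul_of_nonneg_left hYsubnorm K.2
      _ = K * (‖v‖ + 1) * ‖h ^ 2‖ := by
          rw [Real.norm_eq_abs, abs_pow, pow_two]; ring
  -- Part 2: Taylor error of the exact solution
  have hyd : HasDerivAt y v t₀ := hy.self_of_nhds
  set g : ℝ → Fin d → ℝ := fun u => F (y (t₀ + u), y (t₀ + u)) with hgdef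
  have hg0 : g 0 = v := by simp [hgdef, hy₀def, hvdef]
  have haff : ∀ u : ℝ, HasDerivAt (fun x : ℝ => t₀ + x) 1 u := fun u =>
    (hasDerivAt_id u).const_add t₀
  have hgd : DifferentiableAt ℝ g 0 := by
    have h2 : DifferentiableAt ℝ (fun u : ℝ => y (t₀ + u)) 0 := by
      have := HasDerivAt.scomp (0 : ℝ) (by simpa using hyd) (haff 0)
      exact this.differentiableAt
    have hFd : DifferentiableAt ℝ F (y₀, y₀) := (hF.differentiable one_ne_zero).differentiableAt
    have hpair : DifferentiableAt ℝ (fun u : ℝ => (y (t₀ + u), y (t₀ + u))) 0 := h2.prodMk h2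
    have hFd' : DifferentiableAt ℝ F ((fun u : ℝ => (y (t₀ + u), y (t₀ + u))) 0) := by
      simpa [hy₀def] using hFd
    exact hFd'.comp (0 : ℝ) hpair
  have hO2' : (fun u : ℝ => g u - v) =O[𝓝 (0 : ℝ)] fun u => u := by
    have := hgd.isBigO_sub
    simpa [hg0] using this
  obtain ⟨C, hCpos, hC⟩ := hO2'.exists_pos
  rw [isBigOWith_iff] at hC
  have hev : ∀ᶠ u in 𝓝 (0 : ℝ),
      HasDerivAt y (F (y (t₀ + u), y (t₀ + u))) (t₀ + u) ∧ ‖g u - v‖ ≤ C * ‖u‖ := by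
    refine Eventually.and ?_ hC
    have ht : Tendsto (fun u : ℝ => t₀ + u) (𝓝 0) (𝓝 t₀) := by
      simpa using (continuous_add_left t₀).tendsto (0 : ℝ)
    exact ht.eventually hy
  rw [Metric.eventually_nhds_iff] at hev
  obtain ⟨δ, δpos, hδ⟩ := hev
  have hO2 : (fun h : ℝ => y (t₀ + h) - y₀ - h • v) =O[𝓝 (0 : ℝ)] fun h => h ^ 2 := by
    rw [isBigO_iff]
    refine ⟨C, ?_⟩
    filter_upwards [Metric.ball_mem_nhds (0 : ℝ) δpos] with h hh
    rw [Metric.mem_ball, Real.dist_eq, sub_zero] at hh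
    set φ : ℝ → Fin d → ℝ := fun u => y (t₀ + u) - u • v with hφdef
    have habs : ∀ u ∈ Set.uIcc (0 : ℝ) h, |u| ≤ |h| := by
      intro u hu
      rw [Set.mem_uIcc] at hu
      rcases hu with ⟨h1, h2⟩ | ⟨h1, h2⟩
      · rw [abs_of_nonneg h1]; exact h2.trans (le_abs_self h)
      · rw [abs_of_nonpos h2]; exact (neg_le_neg h1).trans (neg_le_abs h)
    have hin : ∀ u ∈ Set.uIcc (0 : ℝ) h, dist u 0 < δ := by
      intro u hu
      rw [Real.dist_eq, sub_zero]
      exact lt_of_le_of_lt (habs u hu) hh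
    have key : ∀ u ∈ Set.uIcc (0 : ℝ) h,
        HasDerivWithinAt φ (g u - v) (Set.uIcc (0 : ℝ) h) u := by
      intro u hu
      have hd := (hδ (hin u hu)).1
      have h1 : HasDerivAt (fun x : ℝ => y (t₀ + x)) (g u) u := by
        have := HasDerivAt.scomp u hd (haff u)
        simpa [hgdef, Function.comp_def] using this
      have h2 : HasDerivAt (fun x : ℝ => x • v) v u := by
        simpa using (hasDerivAt_id u).smul_const v
      exact (h1.sub h2).hasDerivWithinAt
    have bound : ∀ u ∈ Set.uIcc (0 : ℝ) h, ‖g u - v‖ ≤ C * |h| := by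
      intro u hu
      refine (hδ (hin u hu)).2.trans ?_
      rw [Real.norm_eq_abs]
      exact mul_le_mul_of_nonneg_left (habs u hu) hCpos.le
    have hmvt := (convex_uIcc (0 : ℝ) h).norm_image_sub_le_of_norm_hasDerivWithin_le
      key bound Set.left_mem_uIcc Set.right_mem_uIcc
    have hφ0 : φ 0 = y₀ := by simp [hφdef, hy₀def]
    rw [hφ0, sub_zero, Real.norm_eq_abs] at hmvt
    calc ‖y (t₀ + h) - y₀ - h • v‖ = ‖φ h - y₀‖ := by
          rw [hφdef]; congr 1; exact sub_right_comm _ _ _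
      _ ≤ C * |h| * |h| := hmvt
      _ = C * ‖h ^ 2‖ := by rw [Real.norm_eq_abs, abs_pow, pow_two]; ring
  have := hO1.sub hO2
  refine this.congr_left fun h => ?_
  abel
end

section
/- The NPRK IMEX Euler stability function R(z₁,z₂) = (1 + z₂)/(1 − z₁) is L-stable in the stiff z₁ limit and stable in the coupled stiff z₂ limit. Precisely: (i) for every fixed z₂ ∈ ℂ, (1 + z₂)/(1 − z₁) tends to 0 as |z₁| → ∞; (ii) for every ε ∈ ℂ, (1 + εz₁)/(1 − z₁) tends to −ε as |z₁| → ∞; consequently β_∞(ε) := lim_{|z₁|→∞} R(z₁, εz₁) = −ε satisfies |β_∞(ε)| ≤ 1 whenever |ε| ≤ 1. -/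
open Filter Topology

lemma aux_sub : Filter.Tendsto (fun z₁ : ℂ => 1 - z₁)
    (Filter.comap (fun z : ℂ => ‖z‖) Filter.atTop) (Filter.comap (fun z : ℂ => ‖z‖) Filter.atTop) := by
  rw [Filter.tendsto_comap_iff]
  have h1 : Filter.Tendsto (fun z₁ : ℂ => ‖z₁‖ - 1)
      (Filter.comap (fun z : ℂ => ‖z‖) Filter.atTop) Filter.atTop :=
    (Filter.tendsto_comap).atTop_add tendsto_const_nhds
  refine Filter.tendsto_atTop_mono (fun z => ?_) h1
  have := norm_sub_norm_le z 1
  rw [norm_sub_rev] at this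
  simpa using this

lemma aux_inv : Filter.Tendsto (fun z₁ : ℂ => (1 - z₁)⁻¹)
    (Filter.comap (fun z : ℂ => ‖z‖) Filter.atTop) (𝓝 0) := by
  have : Filter.comap (fun z : ℂ => ‖z‖) Filter.atTop = Bornology.cobounded ℂ := by
    rw [← comap_norm_atTop]
  exact (this ▸ tendsto_inv₀_cobounded).comp aux_sub

/-- The NPRK IMEX Euler stability function `R(z₁,z₂) = (1 + z₂)/(1 − z₁)` is
L-stable in the stiff `z₁` limit and stable in the coupled stiff `z₂` limit. -/
theorem nprk_imex_euler_L_stable_and_coupled_stable :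
    (∀ z₂ : ℂ, Filter.Tendsto (fun z₁ : ℂ => (1 + z₂) / (1 - z₁))
      (Filter.comap (fun z : ℂ => ‖z‖) Filter.atTop) (𝓝 0)) ∧
    (∀ ε : ℂ, Filter.Tendsto (fun z₁ : ℂ => (1 + ε * z₁) / (1 - z₁))
      (Filter.comap (fun z : ℂ => ‖z‖) Filter.atTop) (𝓝 (-ε))) ∧
    (∀ ε : ℂ, ‖ε‖ ≤ 1 → ‖-ε‖ ≤ 1) := by
  refine ⟨fun z₂ => ?_, fun ε => ?_, fun ε h => by simpa using h⟩
  · simpa using (aux_inv.const_mul (1 + z₂)).congr (fun z => by ring)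
  · have h : Filter.Tendsto (fun z₁ : ℂ => (1 + ε) * (1 - z₁)⁻¹ + (-ε))
        (Filter.comap (fun z : ℂ => ‖z‖) Filter.atTop) (𝓝 ((1 + ε) * 0 + (-ε))) :=
      (aux_inv.const_mul (1 + ε)).add tendsto_const_nhds
    rw [mul_zero, zero_add] at h
    refine h.congr' ?_
    filter_upwards [(Filter.tendsto_comap (f := fun z : ℂ => ‖z‖)).eventually_ge_atTop 2] with z hz
    have hz1 : (1 : ℂ) - z ≠ 0 := by
      intro h0
      have : z = 1 := by linear_combination -h0
      rw [this] at hz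
      norm_num at hz
    field_simp
    ring
end

section
/- Let z₁, z₂ ∈ ℂ with z₁ ≠ 2, and let y_n, Y₂, y_{n+1} ∈ ℂ satisfy Y₂ = y_n + (1/2)(z₁Y₂ + z₂y_n) and y_{n+1} = y_n + (z₁ + z₂)Y₂ (the IMEX-NPRK2[31] midpoint method applied to the partitioned Dahlquist equation). Then y_{n+1} = R(z₁,z₂)·y_n with stability function R(z₁,z₂) = (z₁(z₂ + 1) + 1 + (z₂ + 1)²)/(2 − z₁). -/
/-- The stability function of the IMEX-NPRK2[31] midpoint method on the partitioned
Dahlquist equation is `R(z₁,z₂) = (z₁(z₂ + 1) + 1 + (z₂ + 1)²)/(2 − z₁)`. -/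
theorem nprk2_31_midpoint_stability_function
    (z₁ z₂ yn Y₂ yn1 : ℂ) (hz₁ : z₁ ≠ 2)
    (hstage : Y₂ = yn + (1 / 2) * (z₁ * Y₂ + z₂ * yn))
    (hout : yn1 = yn + (z₁ + z₂) * Y₂) :
    yn1 = ((z₁ * (z₂ + 1) + 1 + (z₂ + 1) ^ 2) / (2 - z₁)) * yn := by
  have h2 : (2 : ℂ) - z₁ ≠ 0 := sub_ne_zero.mpr (Ne.symm hz₁)
  rw [div_mul_eq_mul_div, eq_div_iff h2]
  linear_combination (2 * (z₁ + z₂)) * hstage + (2 - z₁) * hout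
end

section
/- Let R(z₁,z₂) = (z₁(z₂ + 1) + 1 + (z₂ + 1)²)/(2 − z₁), the stability function of the IMEX-NPRK2[31] midpoint method. For every fixed z₂ ∈ ℂ, R(z₁,z₂) tends to −(z₂ + 1) as |z₁| → ∞; consequently the modulus of the stiff-z₁ limit is at most 1 if and only if |z₂ + 1| ≤ 1, so the method is only conditionally stable in the stiff z₁ limit. -/
open Filter Topology

/-- For the IMEX-NPRK2[31] midpoint stability function
`R(z₁,z₂) = (z₁(z₂ + 1) + 1 + (z₂ + 1)²)/(2 − z₁)`, the stiff-`z₁` limit is `−(z₂ + 1)`;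
its modulus is at most 1 iff `|z₂ + 1| ≤ 1`, i.e. the method is only conditionally
stable in the stiff `z₁` limit. -/
theorem nprk2_31_midpoint_conditional_stiff_stability (z₂ : ℂ) :
    Filter.Tendsto (fun z₁ : ℂ => (z₁ * (z₂ + 1) + 1 + (z₂ + 1) ^ 2) / (2 - z₁))
      (Filter.comap (fun z : ℂ => ‖z‖) Filter.atTop) (𝓝 (-(z₂ + 1))) ∧
    (‖-(z₂ + 1)‖ ≤ 1 ↔ ‖z₂ + 1‖ ≤ 1) := by
  constructor
  · set l := Filter.comap (fun z : ℂ => ‖z‖) Filter.atTop with hl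
    set a : ℂ := z₂ + 1 with ha
    set c : ℂ := 1 + a ^ 2 + 2 * a with hc
    have habs : Tendsto (fun z₁ : ℂ => ‖z₁‖) l atTop := tendsto_comap
    -- ‖2 - z₁‖ → ∞
    have hden : Tendsto (fun z₁ : ℂ => ‖2 - z₁‖) l atTop := by
      apply tendsto_atTop_mono (f := fun z₁ : ℂ => ‖z₁‖ - 2)
      · intro z₁
        have h2 : |‖(2 : ℂ)‖ - ‖z₁‖| ≤ ‖2 - z₁‖ :=
          abs_norm_sub_norm_le 2 z₁
        have h3 : ‖(2 : ℂ)‖ = 2 := by simp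
        have := abs_le.mp h2
        linarith [this.1]
      · exact tendsto_atTop_add_const_right _ (-2) habs |>.congr (by intro x; ring_nf)
    -- (2 - z₁)⁻¹ → 0
    have hinv : Tendsto (fun z₁ : ℂ => (2 - z₁)⁻¹) l (𝓝 0) := by
      rw [tendsto_zero_iff_norm_tendsto_zero]
      simpa [Function.comp_def] using
        (tendsto_inv_atTop_zero.comp hden)
    have htail : Tendsto (fun z₁ : ℂ => c / (2 - z₁)) l (𝓝 0) := by
      have := hinv.const_mul c
      simpa [div_eq_mul_inv] using this
    have hmain : Tendsto (fun z₁ : ℂ => -a + c / (2 - z₁)) l (𝓝 (-a)) := by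
      simpa using (tendsto_const_nhds.add htail)
    have hev : ∀ᶠ z₁ : ℂ in l, (z₁ * a + 1 + a ^ 2) / (2 - z₁) = -a + c / (2 - z₁) := by
      filter_upwards [habs.eventually (eventually_gt_atTop 2)] with z₁ hz
      have hne : (2 : ℂ) - z₁ ≠ 0 := by
        intro h
        have : z₁ = 2 := by linear_combination -h
        rw [this] at hz
        simp at hz
      field_simp
      ring
    exact hmain.congr' (by filter_upwards [hev] with z₁ h using h.symm)
  · rw [norm_neg]
end

section
/- Let z₁, z₂ ∈ ℂ with z₁ ≠ 2 and z₂ ≠ 2, and let y_n, Y₂, Y₃, y_{n+1} ∈ ℂ satisfy Y₂ = y_n + (1/2)(z₁Y₂ + z₂y_n), Y₃ = y_n + (1/2)(z₁Y₂ + z₂Y₃), and y_{n+1} = y_n + (z₁Y₂ + z₂Y₃) (the implicit-implicit NPRK Midpoint method applied to the partitioned Dahlquist equation). Then y_{n+1} = R(z₁,z₂)·y_n with the separable stability function R(z₁,z₂) = ((z₁ + 2)/(z₁ − 2))·((z₂ + 2)/(z₂ − 2)). -/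
/-- The IMIM NPRK Midpoint method applied to the partitioned Dahlquist equation has the
separable stability function `R(z₁,z₂) = ((z₁ + 2)/(z₁ − 2))·((z₂ + 2)/(z₂ − 2))`. -/
theorem imim_nprk_midpoint_stability_function
    (z₁ z₂ yn Y₂ Y₃ yn1 : ℂ) (hz₁ : z₁ ≠ 2) (hz₂ : z₂ ≠ 2)
    (hstage2 : Y₂ = yn + (1 / 2) * (z₁ * Y₂ + z₂ * yn))
    (hstage3 : Y₃ = yn + (1 / 2) * (z₁ * Y₂ + z₂ * Y₃))
    (hout : yn1 = yn + (z₁ * Y₂ + z₂ * Y₃)) :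
    yn1 = (((z₁ + 2) / (z₁ - 2)) * ((z₂ + 2) / (z₂ - 2))) * yn := by
  have h1 : z₁ - 2 ≠ 0 := sub_ne_zero.mpr hz₁
  have h2 : z₂ - 2 ≠ 0 := sub_ne_zero.mpr hz₂
  have e2 : (z₁ - 2) * Y₂ = -(z₂ + 2) * yn := by linear_combination (-2) * hstage2
  have e3 : (z₂ - 2) * Y₃ = -(2 * yn + z₁ * Y₂) := by linear_combination (-2) * hstage3
  have e3' : (z₁ - 2) * ((z₂ - 2) * Y₃) = -(2 * yn * (z₁ - 2)) + z₁ * ((z₂ + 2) * yn) := by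
    linear_combination (z₁ - 2) * e3 - z₁ * e2
  field_simp
  linear_combination ((z₁ - 2) * (z₂ - 2)) * hout + (z₁ * (z₂ - 2)) * e2 + z₂ * e3'
end

section
/- Let z₁, z₂ ∈ ℂ with z₁ ≠ 2 and z₂ ≠ 2, and let y_n, Y₂, Y₃, y_{n+1} ∈ ℂ satisfy Y₂ = y_n + (1/2)(z₁Y₂ + z₂y_n), Y₃ = y_n + (1/2)(z₁Y₂ + z₂y_n) + (1/2)(z₁Y₂ + z₂Y₃), and y_{n+1} = y_n + (1/2)(z₁Y₂ + z₂y_n) + (1/2)(z₁Y₂ + z₂Y₃) (the implicit-implicit NPRK Midpoint/Crank–Nicolson method applied to the partitioned Dahlquist equation). Then y_{n+1} = R(z₁,z₂)·y_n with the separable stability function R(z₁,z₂) = ((z₁ + 2)/(z₁ − 2))·((z₂ + 2)/(z₂ − 2)). -/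
/-- The IMIM NPRK Midpoint/Crank–Nicolson method applied to the partitioned Dahlquist
equation has the separable stability function
`R(z₁,z₂) = ((z₁ + 2)/(z₁ − 2))·((z₂ + 2)/(z₂ − 2))`. -/
theorem imim_nprk_midpoint_crank_nicolson_stability_function
    (z₁ z₂ yn Y₂ Y₃ yn1 : ℂ) (hz₁ : z₁ ≠ 2) (hz₂ : z₂ ≠ 2)
    (hstage2 : Y₂ = yn + (1 / 2) * (z₁ * Y₂ + z₂ * yn))
    (hstage3 : Y₃ = yn + (1 / 2) * (z₁ * Y₂ + z₂ * yn) + (1 / 2) * (z₁ * Y₂ + z₂ * Y₃))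
    (hout : yn1 = yn + (1 / 2) * (z₁ * Y₂ + z₂ * yn) + (1 / 2) * (z₁ * Y₂ + z₂ * Y₃)) :
    yn1 = (((z₁ + 2) / (z₁ - 2)) * ((z₂ + 2) / (z₂ - 2))) * yn := by
  have h1 : z₁ - 2 ≠ 0 := sub_ne_zero.mpr hz₁
  have h2 : z₂ - 2 ≠ 0 := sub_ne_zero.mpr hz₂
  have hY2 : (2 - z₁) * Y₂ = (2 + z₂) * yn := by linear_combination 2 * hstage2
  have hY3 : (2 - z₂) * Y₃ = (2 + z₂) * yn + 2 * z₁ * Y₂ := by linear_combination 2 * hstage3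
  rw [hout, ← hstage3]
  field_simp
  linear_combination (2 - z₁) * hY3 + 2 * z₁ * hY2
end

section
/- For every z ∈ ℂ with Re(z) ≤ 0 one has |(z + 2)/(z − 2)| ≤ 1; consequently, for all z₁, z₂ ∈ ℂ with Re(z₁) ≤ 0 and Re(z₂) ≤ 0, the stability function R(z₁,z₂) = ((z₁ + 2)/(z₁ − 2))·((z₂ + 2)/(z₂ − 2)) of the second-order IMIM NPRK methods satisfies |R(z₁,z₂)| ≤ 1. Hence these IMIM NPRK methods are A-stable in the sense that their stability region contains ℂ⁻ × ℂ⁻. -/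
lemma key (z : ℂ) (hz : z.re ≤ 0) : ‖(z + 2) / (z - 2)‖ ≤ 1 := by
  rw [norm_div, div_le_one]
  · have := Complex.sq_norm (z + 2)
    rw [← Real.sqrt_sq (norm_nonneg (z+2)), ← Real.sqrt_sq (norm_nonneg (z-2))]
    apply Real.sqrt_le_sqrt
    rw [Complex.sq_norm, Complex.sq_norm]
    simp [Complex.normSq_apply]
    nlinarith
  · have h2 : z - 2 ≠ 0 := by
      intro h
      have hz2 : z = 2 := sub_eq_zero.mp h
      rw [hz2] at hz
      norm_num at hz
    simpa using (norm_pos_iff.mpr h2)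

/-- `|(z + 2)/(z − 2)| ≤ 1` on the closed left half-plane; consequently the separable
stability function `R(z₁,z₂) = ((z₁+2)/(z₁−2))·((z₂+2)/(z₂−2))` of the second-order
IMIM NPRK methods satisfies `|R(z₁,z₂)| ≤ 1` on `ℂ⁻ × ℂ⁻`, i.e. the methods are
A-stable. -/
theorem imim_nprk_second_order_A_stable :
    (∀ z : ℂ, z.re ≤ 0 → ‖(z + 2) / (z - 2)‖ ≤ 1) ∧
    (∀ z₁ z₂ : ℂ, z₁.re ≤ 0 → z₂.re ≤ 0 →
      ‖((z₁ + 2) / (z₁ - 2)) * ((z₂ + 2) / (z₂ - 2))‖ ≤ 1) := by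
  refine ⟨key, fun z₁ z₂ h₁ h₂ => ?_⟩
  rw [norm_mul]
  exact mul_le_one₀ (key z₁ h₁) (norm_nonneg _) (key z₂ h₂)
end

section
/- Let b ∈ ℝ with b ≠ 0 and define c₃(b) = −32b² − 8/b² + 80b + 40/b − 80. Then c₃(b) = 0 if and only if b = 1/2 or b = 1. (Hence the stability function of the one-parameter family of second-order IMIM NPRK methods is separable precisely for the parameter values b₂₃ ∈ {1/2, 1}.) -/
/-- For `b ≠ 0`, the separability constant `c₃(b) = −32b² − 8/b² + 80b + 40/b − 80`
of the one-parameter family of second-order IMIM NPRK methods vanishes iff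
`b = 1/2` or `b = 1`. -/
theorem imim_nprk_separability_constant_zero_iff
    (b : ℝ) (hb : b ≠ 0) :
    -32 * b ^ 2 - 8 / b ^ 2 + 80 * b + 40 / b - 80 = 0 ↔ b = 1 / 2 ∨ b = 1 := by
  have hq : 2*b^2 - 2*b + 1 > 0 := by nlinarith [sq_nonneg (2*b-1)]
  constructor
  · intro h
    field_simp at h
    have h3 : (2*b-1)*(b-1)*(2*b^2-2*b+1) = 0 := by
      have h4 : b * (-8 * ((2*b-1)*(b-1)*(2*b^2-2*b+1))) = 0 := by linear_combination b * h; 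
      have := mul_eq_zero.mp h4
      rcases this with h5 | h5
      · exact absurd h5 hb
      · linarith
    rcases mul_eq_zero.mp h3 with h4 | h4
    · rcases mul_eq_zero.mp h4 with h5 | h5
      · left; linarith
      · right; linarith
    · linarith
  · rintro (rfl | rfl) <;> norm_num
end

section
/- Define γ₀ : ℝ \ {1} → ℝ by γ₀(b) = (16b⁴ − 24b³ + 17b² − 6b + 1)/(b − 1)². Then: (i) for b ≠ 1, the derivative γ₀'(b) = 0 if and only if b = 1 − 1/√2 or b = 1 + 1/√2; (ii) γ₀(1 − 1/√2) = 57 − 40√2 and γ₀(1 + 1/√2) = 57 + 40√2; (iii) γ₀ attains its global minimum over ℝ \ {1} at b = 1 − 1/√2, with minimum value 57 − 40√2 ≤ 1. -/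
/-- For `γ₀(b) = (16b⁴ − 24b³ + 17b² − 6b + 1)/(b − 1)²` (the `θ = 0` value of the
coupled stiff-limit stability function of the three-stage two-solve L-stable
second-order IMEX-NPRK family): (i) for `b ≠ 1` the derivative vanishes exactly at
`b = 1 ∓ 1/√2`; (ii) the critical values are `57 ∓ 40√2`; (iii) the global minimum
over `ℝ \ {1}` is attained at `b = 1 − 1/√2` with value `57 − 40√2 ≤ 1`. -/
theorem imex_nprk2_32_gamma_zero_optimization
    (γ₀ : ℝ → ℝ)
    (hγ : ∀ b : ℝ, γ₀ b = (16 * b ^ 4 - 24 * b ^ 3 + 17 * b ^ 2 - 6 * b + 1) / (b - 1) ^ 2) :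
    (∀ b : ℝ, b ≠ 1 →
      (deriv γ₀ b = 0 ↔ b = 1 - 1 / Real.sqrt 2 ∨ b = 1 + 1 / Real.sqrt 2)) ∧
    (γ₀ (1 - 1 / Real.sqrt 2) = 57 - 40 * Real.sqrt 2 ∧
      γ₀ (1 + 1 / Real.sqrt 2) = 57 + 40 * Real.sqrt 2) ∧
    ((∀ b : ℝ, b ≠ 1 → γ₀ (1 - 1 / Real.sqrt 2) ≤ γ₀ b) ∧
      57 - 40 * Real.sqrt 2 ≤ 1) := by
  have hfun : γ₀ = fun b : ℝ =>
      (16 * b ^ 4 - 24 * b ^ 3 + 17 * b ^ 2 - 6 * b + 1) / (b - 1) ^ 2 := funext hγ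
  set r := Real.sqrt 2 with hrdef
  have hr2 : r ^ 2 = 2 := Real.sq_sqrt (by norm_num)
  have hrpos : (0 : ℝ) < r := Real.sqrt_pos.mpr (by norm_num)
  have hr0 : r ≠ 0 := ne_of_gt hrpos
  have hr54 : (5 : ℝ) / 4 ≤ r := by nlinarith
  have hinv : 1 / r = r / 2 := by
    rw [div_eq_div_iff hr0 (by norm_num : (2:ℝ) ≠ 0)]
    linear_combination -hr2
  -- evaluations
  have hden1 : ((1 : ℝ) - r / 2 - 1) ^ 2 = 1 / 2 := by linear_combination hr2 / 4
  have hden2 : ((1 : ℝ) + r / 2 - 1) ^ 2 = 1 / 2 := by linear_combination hr2 / 4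
  have ev1 : γ₀ (1 - 1 / r) = 57 - 40 * r := by
    rw [hγ, hinv, div_eq_iff (by rw [hden1]; norm_num)]
    linear_combination (-2 + 5 * r + r ^ 2) * hr2
  have ev2 : γ₀ (1 + 1 / r) = 57 + 40 * r := by
    rw [hγ, hinv, div_eq_iff (by rw [hden2]; norm_num)]
    linear_combination (-2 - 5 * r + r ^ 2) * hr2
  refine ⟨?_, ⟨ev1, ev2⟩, ?_, by nlinarith⟩
  · -- derivative characterization
    intro b hb1
    have hb : b - 1 ≠ 0 := sub_ne_zero.mpr hb1
    have hD : (b - 1) ^ 2 ≠ 0 := pow_ne_zero _ hb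
    have h1 : HasDerivAt (fun x : ℝ => 16 * x ^ 4 - 24 * x ^ 3 + 17 * x ^ 2 - 6 * x + 1)
        (64 * b ^ 3 - 72 * b ^ 2 + 34 * b - 6) b := by
      have h := ((((hasDerivAt_pow 4 b).const_mul 16).sub
        ((hasDerivAt_pow 3 b).const_mul 24)).add
        (((hasDerivAt_pow 2 b).const_mul 17).sub ((hasDerivAt_id' b).const_mul 6))).add_const 1
      exact (h.congr_deriv (by norm_num <;> ring)).congr_of_eventuallyEq
        (Filter.Eventually.of_forall fun x => by simp only [Pi.sub_apply, Pi.add_apply]; ring)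
    have h2 : HasDerivAt (fun x : ℝ => (x - 1) ^ 2) (2 * (b - 1)) b := by
      have h := ((hasDerivAt_id b).sub_const 1).pow 2
      exact (h.congr_deriv (by norm_num [id] <;> ring)).congr_of_eventuallyEq
        (Filter.Eventually.of_forall fun x => by simp [Pi.pow_apply])
    have hdiv := h1.div h2 hD
    have hderiv : deriv γ₀ b =
        ((64 * b ^ 3 - 72 * b ^ 2 + 34 * b - 6) * (b - 1) ^ 2 -
          (16 * b ^ 4 - 24 * b ^ 3 + 17 * b ^ 2 - 6 * b + 1) * (2 * (b - 1))) /
          ((b - 1) ^ 2) ^ 2 := by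
      rw [hfun]; exact hdiv.deriv
    rw [hderiv, div_eq_zero_iff]
    have hD2 : ((b - 1) ^ 2) ^ 2 ≠ 0 := pow_ne_zero _ hD
    simp only [hD2, or_false]
    rw [show (64 * b ^ 3 - 72 * b ^ 2 + 34 * b - 6) * (b - 1) ^ 2 -
          (16 * b ^ 4 - 24 * b ^ 3 + 17 * b ^ 2 - 6 * b + 1) * (2 * (b - 1)) =
        4 * (b - 1) * (2 * (b - 1) ^ 2 - 1) * (4 * (b - 1) ^ 2 + 5 * (b - 1) + 2) from by ring]
    have hQ : 0 < 4 * (b - 1) ^ 2 + 5 * (b - 1) + 2 := by nlinarith [sq_nonneg (8 * (b - 1) + 5)]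
    constructor
    · intro h0
      rcases mul_eq_zero.mp h0 with h0 | h0
      · rcases mul_eq_zero.mp h0 with h0 | h0
        · exact absurd h0 (by positivity)
        · -- 2*(b-1)^2 - 1 = 0
          have hsq : (b - 1) ^ 2 = 1 / 2 := by linarith
          have hir : (1 / r) ^ 2 = 1 / 2 := by rw [div_pow, one_pow, hr2]
          have hfac : (b - 1 - 1 / r) * (b - 1 + 1 / r) = 0 := by
            linear_combination hsq - hir
          rcases mul_eq_zero.mp hfac with h | h
          · right; linarith [sub_eq_zero.mp h]
          · left
            have : b - 1 = -(1 / r) := by linarith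
            linarith
      · exact absurd h0 (ne_of_gt hQ)
    · rintro (rfl | rfl)
      · have hfac : 2 * ((1 - 1 / r) - 1) ^ 2 - 1 = 0 := by
          rw [hinv]; linear_combination hr2 / 2
        rw [show (4 : ℝ) * (1 - 1 / r - 1) * (2 * (1 - 1 / r - 1) ^ 2 - 1) *
            (4 * (1 - 1 / r - 1) ^ 2 + 5 * (1 - 1 / r - 1) + 2) =
          (2 * ((1 - 1 / r) - 1) ^ 2 - 1) * (4 * (1 - 1 / r - 1) *
            (4 * (1 - 1 / r - 1) ^ 2 + 5 * (1 - 1 / r - 1) + 2)) from by ring, hfac, zero_mul]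
      · have hfac : 2 * ((1 + 1 / r) - 1) ^ 2 - 1 = 0 := by
          rw [hinv]; linear_combination hr2 / 2
        rw [show (4 : ℝ) * (1 + 1 / r - 1) * (2 * (1 + 1 / r - 1) ^ 2 - 1) *
            (4 * (1 + 1 / r - 1) ^ 2 + 5 * (1 + 1 / r - 1) + 2) =
          (2 * ((1 + 1 / r) - 1) ^ 2 - 1) * (4 * (1 + 1 / r - 1) *
            (4 * (1 + 1 / r - 1) ^ 2 + 5 * (1 + 1 / r - 1) + 2)) from by ring, hfac, zero_mul]
  · -- global minimum
    intro b hb1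
    have hb : b - 1 ≠ 0 := sub_ne_zero.mpr hb1
    have hDpos : (0 : ℝ) < (b - 1) ^ 2 :=
      lt_of_le_of_ne (sq_nonneg _) (Ne.symm (pow_ne_zero 2 hb))
    rw [ev1, hγ b, le_div_iff₀ hDpos]
    have key : (16 * b ^ 4 - 24 * b ^ 3 + 17 * b ^ 2 - 6 * b + 1) -
        (57 - 40 * r) * (b - 1) ^ 2 =
        (1 / 4) * ((4 * b + 1 - 2 * r) ^ 2 + (20 * r - 25)) * (2 * b + r - 2) ^ 2 := by
      linear_combination (8 * b ^ 2 - 26 * b + 16 - r ^ 2) * hr2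
    nlinarith [mul_nonneg (sq_nonneg (4 * b + 1 - 2 * r)) (sq_nonneg (2 * b + r - 2)),
      mul_nonneg (by linarith : (0:ℝ) ≤ 20 * r - 25) (sq_nonneg (2 * b + r - 2)), key]
end

section
/- For a ∈ ℝ with a ≠ 0 and a ≠ 1/2, define c₀(a) = (a(a(4(a−2)a+9)−6)+2)/((1−2a)²a²) and c₁(a) = (2 − 2a(2(a−2)a+3))/((1−2a)²a²). Then: (i) c₀(a) − c₁(a) = 1 for all such a, i.e., γ(π;a) = 1; (ii) the value at θ = 0, γ₀(a) := c₀(a) + c₁(a) = (4a⁴ − 12a³ + 17a² − 12a + 4)/(a²(1−2a)²), satisfies γ₀(1 + 1/√2) = 57 − 40√2 and γ₀(1 − 1/√2) = 57 + 40√2, and both a = 1 + 1/√2 and a = 1 − 1/√2 are critical points of γ₀. -/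
private lemma nprk_hasDerivAt_P (x : ℝ) :
    HasDerivAt (fun a : ℝ => 4 * a ^ 4 - 12 * a ^ 3 + 17 * a ^ 2 - 12 * a + 4)
      (16 * x ^ 3 - 36 * x ^ 2 + 34 * x - 12) x := by
  have h := (((((hasDerivAt_pow 4 x).const_mul (4 : ℝ)).sub
      ((hasDerivAt_pow 3 x).const_mul (12 : ℝ))).add
      ((hasDerivAt_pow 2 x).const_mul (17 : ℝ))).sub
      ((hasDerivAt_id x).const_mul (12 : ℝ))).add_const (4 : ℝ)
  refine (h.congr_deriv ?_).congr_of_eventuallyEq (Filter.Eventually.of_forall fun a => ?_)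
  · norm_num
    ring
  · simp only [Pi.add_apply, Pi.sub_apply, id]

private lemma nprk_hasDerivAt_Q (x : ℝ) :
    HasDerivAt (fun a : ℝ => a ^ 2 * (1 - 2 * a) ^ 2)
      (16 * x ^ 3 - 12 * x ^ 2 + 2 * x) x := by
  have e : (fun a : ℝ => a ^ 2 * (1 - 2 * a) ^ 2)
      = fun a : ℝ => 4 * a ^ 4 - 4 * a ^ 3 + a ^ 2 := by
    funext a; ring
  rw [e]
  have h := (((hasDerivAt_pow 4 x).const_mul (4 : ℝ)).sub
      ((hasDerivAt_pow 3 x).const_mul (4 : ℝ))).add (hasDerivAt_pow 2 x)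
  refine (h.congr_deriv ?_).congr_of_eventuallyEq (Filter.Eventually.of_forall fun a => ?_)
  · norm_num
    ring
  · simp only [Pi.add_apply, Pi.sub_apply, id]

private lemma nprk_deriv_zero (γ₀ : ℝ → ℝ)
    (hγ₀ : ∀ a : ℝ, γ₀ a =
      (4 * a ^ 4 - 12 * a ^ 3 + 17 * a ^ 2 - 12 * a + 4) / (a ^ 2 * (1 - 2 * a) ^ 2))
    (x : ℝ) (hx0 : x ≠ 0) (hx2 : 1 - 2 * x ≠ 0)
    (hq : 2 * x ^ 2 - 4 * x + 1 = 0) : deriv γ₀ x = 0 := by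
  have hQ : x ^ 2 * (1 - 2 * x) ^ 2 ≠ 0 :=
    mul_ne_zero (pow_ne_zero _ hx0) (pow_ne_zero _ hx2)
  have hdiv := (nprk_hasDerivAt_P x).div (nprk_hasDerivAt_Q x) hQ
  have hfun : γ₀ = fun a : ℝ =>
      (4 * a ^ 4 - 12 * a ^ 3 + 17 * a ^ 2 - 12 * a + 4) / (a ^ 2 * (1 - 2 * a) ^ 2) :=
    funext hγ₀
  rw [hfun, show deriv (fun a : ℝ =>
      (4 * a ^ 4 - 12 * a ^ 3 + 17 * a ^ 2 - 12 * a + 4) / (a ^ 2 * (1 - 2 * a) ^ 2)) x = _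
      from hdiv.deriv, div_eq_zero_iff]
  left
  linear_combination (16 * x ^ 4 - 32 * x ^ 3 + 28 * x ^ 2 - 8 * x) * hq

/-- For the four-stage two-solve L-stable second-order IMEX-NPRK family with parameter
`a = a₂₂₁`: (i) `c₀(a) − c₁(a) = 1`, i.e. `γ(π;a) = 1`; (ii) the `θ = 0` value
`γ₀(a) = c₀(a) + c₁(a) = (4a⁴ − 12a³ + 17a² − 12a + 4)/(a²(1−2a)²)` satisfies
`γ₀(1 + 1/√2) = 57 − 40√2` and `γ₀(1 − 1/√2) = 57 + 40√2`, and both `a = 1 ± 1/√2`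
are critical points of `γ₀`. -/
theorem imex_nprk2_42_gamma_optimization
    (c₀ c₁ γ₀ : ℝ → ℝ)
    (hc₀ : ∀ a : ℝ, c₀ a =
      (a * (a * (4 * (a - 2) * a + 9) - 6) + 2) / ((1 - 2 * a) ^ 2 * a ^ 2))
    (hc₁ : ∀ a : ℝ, c₁ a =
      (2 - 2 * a * (2 * (a - 2) * a + 3)) / ((1 - 2 * a) ^ 2 * a ^ 2))
    (hγ₀ : ∀ a : ℝ, γ₀ a =
      (4 * a ^ 4 - 12 * a ^ 3 + 17 * a ^ 2 - 12 * a + 4) / (a ^ 2 * (1 - 2 * a) ^ 2)) :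
    (∀ a : ℝ, a ≠ 0 → a ≠ 1 / 2 → c₀ a - c₁ a = 1) ∧
    (∀ a : ℝ, a ≠ 0 → a ≠ 1 / 2 → c₀ a + c₁ a = γ₀ a) ∧
    (γ₀ (1 + 1 / Real.sqrt 2) = 57 - 40 * Real.sqrt 2 ∧
      γ₀ (1 - 1 / Real.sqrt 2) = 57 + 40 * Real.sqrt 2) ∧
    (deriv γ₀ (1 + 1 / Real.sqrt 2) = 0 ∧ deriv γ₀ (1 - 1 / Real.sqrt 2) = 0) := by
  set s := Real.sqrt 2 with hsdef
  have hs : s ^ 2 = 2 := Real.sq_sqrt (by norm_num)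
  have hs0 : 0 ≤ s := Real.sqrt_nonneg 2
  have hs1 : 1 < s := by nlinarith
  have hs2 : s < 2 := by nlinarith
  have h1s : (1 : ℝ) / s = s / 2 := by
    rw [div_eq_div_iff (by positivity) (by norm_num : (2:ℝ) ≠ 0)]
    nlinarith
  -- nonvanishing at the two critical points
  have hxa0 : (1 : ℝ) + s / 2 ≠ 0 := by positivity
  have hxa2 : (1 : ℝ) - 2 * (1 + s / 2) ≠ 0 := by nlinarith
  have hxb0 : (1 : ℝ) - s / 2 ≠ 0 := by nlinarith
  have hxb2 : (1 : ℝ) - 2 * (1 - s / 2) ≠ 0 := by nlinarith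
  have hqa : 2 * (1 + s / 2) ^ 2 - 4 * (1 + s / 2) + 1 = 0 := by
    linear_combination (1 / 2 : ℝ) * hs
  have hqb : 2 * (1 - s / 2) ^ 2 - 4 * (1 - s / 2) + 1 = 0 := by
    linear_combination (1 / 2 : ℝ) * hs
  refine ⟨?_, ?_, ⟨?_, ?_⟩, ?_, ?_⟩
  · intro a ha0 ha2
    have h2 : 1 - 2 * a ≠ 0 := by
      intro h; apply ha2; linarith
    rw [hc₀, hc₁]
    rw [div_sub_div_same, div_eq_one_iff_eq (mul_ne_zero (pow_ne_zero _ h2) (pow_ne_zero _ ha0))]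
    ring
  · intro a ha0 ha2
    have h2 : 1 - 2 * a ≠ 0 := by
      intro h; apply ha2; linarith
    rw [hc₀, hc₁, hγ₀]
    field_simp
    ring
  · rw [hγ₀, h1s, div_eq_iff (mul_ne_zero (pow_ne_zero _ hxa0) (pow_ne_zero _ hxa2))]
    linear_combination ((2 * (1 + s / 2) ^ 2 - 2 * (1 + s / 2) + 7 / 2)
      - (57 - 40 * s) * (2 * (1 + s / 2) ^ 2 + 2 * (1 + s / 2) + 7 / 2)) * hqa
      + (240 : ℝ) * hs
  · rw [hγ₀, h1s, div_eq_iff (mul_ne_zero (pow_ne_zero _ hxb0) (pow_ne_zero _ hxb2))]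
    linear_combination ((2 * (1 - s / 2) ^ 2 - 2 * (1 - s / 2) + 7 / 2)
      - (57 + 40 * s) * (2 * (1 - s / 2) ^ 2 + 2 * (1 - s / 2) + 7 / 2)) * hqb
      + (240 : ℝ) * hs
  · rw [h1s]
    exact nprk_deriv_zero γ₀ hγ₀ _ hxa0 hxa2 hqa
  · rw [h1s]
    exact nprk_deriv_zero γ₀ hγ₀ _ hxb0 hxb2 hqb
end

section
/- Let s ≥ 1 and let (a_{ijk}) for 1 ≤ i,j,k ≤ s and (b_{ij}) for 1 ≤ i,j ≤ s be real coefficients such that for each stage i: a_{ijk} = 0 whenever j > i or k > i, a_{iik} = 0 for all k ≠ i−1, a_{iji} = 0 for all j ≠ i−1, and at least one of a_{i,i,i−1}, a_{i,i−1,i} is zero. Then there exist ŝ ≥ s and real sequentially-coupled coefficients (ã_{i,j,j−1}) for 2 ≤ j ≤ i ≤ ŝ, (ã_{i,i−1,i}) for 2 ≤ i ≤ ŝ, and (b̃_{i,i−1}) for 2 ≤ i ≤ ŝ, such that for every dimension d, every function F : ℝ^d × ℝ^d → ℝ^d, every h ∈ ℝ, every y_n ∈ ℝ^d, and every tuple (Y₁,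 …, Y_s) with Y₁ = y_n and Y_i = y_n + h[a_{i,i,i−1}F(Y_i,Y_{i−1}) + a_{i,i−1,i}F(Y_{i−1},Y_i) + Σ_{j<i} Σ_{k<i} a_{ijk}F(Y_j,Y_k)] for i = 2,…,s, there exists a tuple (Ỹ₁, …, Ỹ_ŝ) with Ỹ₁ = y_n and Ỹ_i = y_n + h[ã_{i,i,i−1}F(Ỹ_i,Ỹ_{i−1}) + ã_{i,i−1,i}F(Ỹ_{i−1},Ỹ_i) + Σ_{j=2}^{i−1} ã_{i,j,j−1}F(Ỹ_j,Ỹ_{j−1})] for i = 2,…,ŝ, whose output agrees with that of the original method: y_n + h Σ_{i,j} b_{ij}F(Y_i,Y_j) = y_n + h Σ_{i=2}^{ŝ} b̃_{i,i−1}F(Ỹ_i,Ỹ_{i−1}). -/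
open Finset

lemma npk_sum_ite_pick {d : ℕ} (R : Finset ℕ) (q : ℕ) (c : ℝ) (G : ℕ → Fin d → ℝ)
    (hq : q ∈ R) :
    ∑ p ∈ R, (if q = p then c else 0) • G p = c • G q := by
  have h1 : ∀ p ∈ R, (if q = p then c else 0) • G p = if q = p then c • G p else 0 := by
    intro p _; split <;> simp
  rw [Finset.sum_congr rfl h1, Finset.sum_ite_eq R q (fun p => c • G p), if_pos hq]

lemma npk_sum_swap_ite {d : ℕ} (S T : Finset ℕ) (c : ℕ → ℕ → ℝ) (Pf : ℕ → ℕ → ℕ)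
    (G : ℕ → Fin d → ℝ) (R : Finset ℕ) (hmem : ∀ j ∈ S, ∀ k ∈ T, Pf j k ∈ R) :
    ∑ p ∈ R, (∑ j ∈ S, ∑ k ∈ T, if Pf j k = p then c j k else 0) • G p
      = ∑ j ∈ S, ∑ k ∈ T, c j k • G (Pf j k) := by
  have h1 : ∀ p ∈ R, (∑ j ∈ S, ∑ k ∈ T, if Pf j k = p then c j k else 0) • G p
      = ∑ j ∈ S, ∑ k ∈ T, (if Pf j k = p then c j k • G p else 0) := by
    intro p _
    rw [Finset.sum_smul]
    refine Finset.sum_congr rfl fun j _ => ?_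
    rw [Finset.sum_smul]
    refine Finset.sum_congr rfl fun k _ => ?_
    split <;> simp
  rw [Finset.sum_congr rfl h1, Finset.sum_comm]
  refine Finset.sum_congr rfl fun j hj => ?_
  rw [Finset.sum_comm]
  refine Finset.sum_congr rfl fun k hk => ?_
  rw [Finset.sum_ite_eq R (Pf j k) (fun p => c j k • G p), if_pos (hmem j hj k hk)]

/-- explicit coefficients of a "copy" stage holding the value `Y u`. -/
def npkCcoef (a : ℕ → ℕ → ℕ → ℝ) (Pf : ℕ → ℕ → ℕ) (u : ℕ) (p : ℕ) : ℝ :=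
  if u ≤ 1 then 0 else
    (if Pf u (u-1) = p then a u u (u-1) else 0)
    + (if Pf (u-1) u = p then a u (u-1) u else 0)
    + (∑ j ∈ Finset.Icc 1 (u-1), ∑ k ∈ Finset.Icc 1 (u-1), if Pf j k = p then a u j k else 0)

lemma npkCcoef_sum {d : ℕ} (a : ℕ → ℕ → ℕ → ℝ) (Pf : ℕ → ℕ → ℕ) (u : ℕ)
    (hu : 2 ≤ u) (R : Finset ℕ) (G : ℕ → Fin d → ℝ)
    (h1 : ∀ j ∈ Finset.Icc 1 (u-1), ∀ k ∈ Finset.Icc 1 (u-1), Pf j k ∈ R)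
    (h2 : Pf u (u-1) ∈ R) (h3 : Pf (u-1) u ∈ R) :
    ∑ p ∈ R, npkCcoef a Pf u p • G p =
      a u u (u-1) • G (Pf u (u-1)) + a u (u-1) u • G (Pf (u-1) u)
      + ∑ j ∈ Finset.Icc 1 (u-1), ∑ k ∈ Finset.Icc 1 (u-1), a u j k • G (Pf j k) := by
  have hrw : ∀ p ∈ R, npkCcoef a Pf u p • G p =
      (if Pf u (u-1) = p then a u u (u-1) else 0) • G p
      + (if Pf (u-1) u = p then a u (u-1) u else 0) • G p
      + (∑ j ∈ Finset.Icc 1 (u-1), ∑ k ∈ Finset.Icc 1 (u-1),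
          if Pf j k = p then a u j k else 0) • G p := by
    intro p _
    unfold npkCcoef
    rw [if_neg (by omega : ¬ u ≤ 1), add_smul, add_smul]
  rw [Finset.sum_congr rfl hrw, Finset.sum_add_distrib, Finset.sum_add_distrib,
    npk_sum_ite_pick R _ _ G h2, npk_sum_ite_pick R _ _ G h3,
    npk_sum_swap_ite _ _ _ _ G R h1]

lemma npkCcoef_eq_zero (a : ℕ → ℕ → ℕ → ℝ) (Pf : ℕ → ℕ → ℕ) (u : ℕ) (p : ℕ)
    (h1 : ∀ j ∈ Finset.Icc 1 (u-1), ∀ k ∈ Finset.Icc 1 (u-1), Pf j k ≠ p)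
    (h2 : Pf u (u-1) ≠ p) (h3 : Pf (u-1) u ≠ p) :
    npkCcoef a Pf u p = 0 := by
  unfold npkCcoef
  by_cases h : u ≤ 1
  · rw [if_pos h]
  · rw [if_neg h, if_neg h2, if_neg h3, Finset.sum_eq_zero fun j hj => Finset.sum_eq_zero fun k hk =>
      if_neg (h1 j hj k hk)]
    simp
/-- value held at relative position `r` of the block appended when extending
a scheme from `t` original stages to `t+1`. -/
def npkNval (t r : ℕ) : ℕ :=
  if r ≤ 1 then t else if r = 2 then t+1 else if r = 3 then t
  else if r ≤ 2*t+3 then (if r % 2 = 0 then (r-2)/2 else t+1)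
  else if r ≤ 4*t+3 then (if r % 2 = 0 then t+1 else (r-2)/2 - t)
  else t+1

/-- extension of the pair-position table. -/
def npkPext (P : ℕ → ℕ → ℕ) (t n : ℕ) (j k : ℕ) : ℕ :=
  if j ≤ t ∧ k ≤ t then P j k
  else if j = t+1 ∧ k ≤ t then (if k = t then n+2 else n+3+2*k)
  else if k = t+1 ∧ j ≤ t then (if j = t then n+3 else n+3+2*t+2*j)
  else n+4*t+5

lemma npkNval_le (t r : ℕ) (ht : 1 ≤ t) : npkNval t r ≤ t + 1 := by
  unfold npkNval; split_ifs <;> omega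

lemma npkNval_pos (t r : ℕ) (ht : 1 ≤ t) : 1 ≤ npkNval t r := by
  unfold npkNval; split_ifs <;> omega

lemma npkNval_one (t : ℕ) : npkNval t 1 = t := by unfold npkNval; split_ifs <;> omega
lemma npkNval_two (t : ℕ) : npkNval t 2 = t + 1 := by unfold npkNval; split_ifs <;> omega
lemma npkNval_three (t : ℕ) : npkNval t 3 = t := by unfold npkNval; split_ifs <;> omega

lemma npkNval_a (t k : ℕ) (h1 : 1 ≤ k) (h2 : k < t) : npkNval t (3+2*k) = t+1 := by
  unfold npkNval
  split_ifs <;> omega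

lemma npkNval_b (t k : ℕ) (h1 : 1 ≤ k) (h2 : k < t) : npkNval t (2+2*k) = k := by
  unfold npkNval
  split_ifs <;> omega

lemma npkNval_c (t j : ℕ) (h1 : 1 ≤ j) (h2 : j < t) : npkNval t (2*t+3+2*j) = j := by
  unfold npkNval
  split_ifs <;> omega

lemma npkNval_d (t j : ℕ) (h1 : 1 ≤ j) (h2 : j < t) : npkNval t (2*t+2+2*j) = t+1 := by
  unfold npkNval
  split_ifs <;> omega

lemma npkNval_e (t : ℕ) : npkNval t (4*t+5) = t+1 := by
  unfold npkNval; split_ifs <;> omega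

lemma npkNval_f (t : ℕ) (ht : 1 ≤ t) : npkNval t (4*t+4) = t+1 := by
  unfold npkNval; split_ifs <;> omega

/-- if `npkNval t r = t+1` then `r = 2` or `r ≥ 5`. -/
lemma npkNval_succ_ge (t r : ℕ) (ht : 1 ≤ t) (h : npkNval t r = t+1) : r = 2 ∨ 5 ≤ r := by
  by_contra hc
  push_neg at hc
  unfold npkNval at h
  split_ifs at h <;> omega
lemma npk_aux (s : ℕ) (a : ℕ → ℕ → ℕ → ℝ)
    (ha4 : ∀ i ∈ Finset.Icc 1 s, a i i (i - 1) = 0 ∨ a i (i - 1) i = 0) :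
    ∀ t, 1 ≤ t → t ≤ s → ∃ (n : ℕ) (A : ℕ → ℕ → ℝ) (Af : ℕ → ℝ) (P : ℕ → ℕ → ℕ),
      t + 2 ≤ n ∧
      (∀ j k, 1 ≤ j → j ≤ t → 1 ≤ k → k ≤ t → 2 ≤ P j k ∧ P j k ≤ n) ∧
      (∀ i, A i i = 0 ∨ Af i = 0) ∧
      ∀ (d : ℕ) (F : (Fin d → ℝ) → (Fin d → ℝ) → (Fin d → ℝ)) (h : ℝ)
        (yn : Fin d → ℝ) (Y : ℕ → (Fin d → ℝ)),
        Y 1 = yn →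
        (∀ i ∈ Finset.Icc 2 s, Y i = yn + h •
          (a i i (i - 1) • F (Y i) (Y (i - 1)) + a i (i - 1) i • F (Y (i - 1)) (Y i) +
            ∑ j ∈ Finset.Icc 1 (i - 1), ∑ k ∈ Finset.Icc 1 (i - 1),
              a i j k • F (Y j) (Y k))) →
        ∃ Yt : ℕ → (Fin d → ℝ),
          Yt 1 = yn ∧
          (∀ i ∈ Finset.Icc 2 n, Yt i = yn + h •
            (A i i • F (Yt i) (Yt (i - 1)) + Af i • F (Yt (i - 1)) (Yt i) +
              ∑ p ∈ Finset.Icc 2 (i - 1), A i p • F (Yt p) (Yt (p - 1)))) ∧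
          (∀ j k, 1 ≤ j → j ≤ t → 1 ≤ k → k ≤ t →
            Yt (P j k) = Y j ∧ Yt (P j k - 1) = Y k) := by
  intro t ht
  induction t, ht using Nat.le_induction with
  | base =>
    intro hts
    refine ⟨3, fun _ _ => 0, fun _ => 0, fun _ _ => 3, by omega,
      fun _ _ _ _ _ _ => ⟨by norm_num, by norm_num⟩,
      fun _ => Or.inl rfl, ?_⟩
    intro d F h yn Y hY1 hY
    refine ⟨fun _ => yn, rfl, ?_, ?_⟩
    · intro i hi
      simp
    · intro j k h1j h2j h1k h2k
      have hj1 : j = 1 := by omega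
      have hk1 : k = 1 := by omega
      subst hj1 hk1
      exact ⟨hY1.symm, hY1.symm⟩
  | succ t ht IH =>
    intro hts
    obtain ⟨n, A, Af, P, hn, hP, hc, hsem⟩ := IH (by omega)
    refine ⟨n + (4*t+5),
      (fun m p => if m ≤ n then A m p else if m = n+2 then
         (∑ j ∈ Finset.Icc 1 t, ∑ k ∈ Finset.Icc 1 t, if P j k = p then a (t+1) j k else 0)
           + (if p = n+2 then a (t+1) (t+1) t else 0)
       else npkCcoef a (npkPext P t n) (npkNval t (m - n)) p),
      (fun m => if m ≤ n then Af m else if m = n+2 then a (t+1) t (t+1) else 0),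
      npkPext P t n, by omega, ?_, ?_, ?_⟩
    · -- bounds on the extended pair table
      intro j k h1j h2j h1k h2k
      by_cases hjk : j ≤ t ∧ k ≤ t
      · have := hP j k h1j hjk.1 h1k hjk.2
        rw [npkPext, if_pos hjk]
        omega
      · rw [npkPext, if_neg hjk]
        split_ifs <;> omega
    · -- diagonal constraint
      intro i
      by_cases hin : i ≤ n
      · simpa [hin] using hc i
      · by_cases hi2 : i = n+2
        · subst hi2
          have hd := ha4 (t+1) (by rw [Finset.mem_Icc]; omega)
          rw [Nat.add_sub_cancel] at hd
          rcases hd with h0 | h0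
          · left
            dsimp only
            rw [if_neg (by omega : ¬ n+2 ≤ n), if_pos rfl, if_pos rfl, h0, add_zero]
            refine Finset.sum_eq_zero fun j hj => ?_
            rw [Finset.mem_Icc] at hj
            refine Finset.sum_eq_zero fun k hk => ?_
            rw [Finset.mem_Icc] at hk
            have := hP j k hj.1 hj.2 hk.1 hk.2
            exact if_neg (by omega)
          · right
            dsimp only
            rw [if_neg (by omega : ¬ n+2 ≤ n), if_pos rfl]
            exact h0
        · right
          simp [hin, hi2]
    · -- semantic part
      intro d F h yn Y hY1 hY
      obtain ⟨Yt, hYt1, hYtEq, hYtP⟩ := hsem d F h yn Y hY1 hY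
      set Q : ℕ → ℕ → ℕ := npkPext P t n with hQ
      set Yt' : ℕ → (Fin d → ℝ) :=
        fun m => if m ≤ n then Yt m else Y (npkNval t (m - n)) with hYt'def
      have hle : ∀ m, m ≤ n → Yt' m = Yt m := by
        intro m hm; rw [hYt'def]; exact if_pos hm
      have hv : ∀ m r, m = n + r → 1 ≤ r → Yt' m = Y (npkNval t r) := by
        intro m r hm hr
        have h1 : ¬ m ≤ n := by omega
        have h2 : m - n = r := by omega
        rw [hYt'def]
        simp only [if_neg h1, h2]
      -- master claim about the extended pair table
      have hQb : ∀ j k, 1 ≤ j → j ≤ t+1 → 1 ≤ k → k ≤ t+1 →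
          2 ≤ Q j k ∧ Q j k ≤ n + (4*t+5) ∧ Yt' (Q j k) = Y j ∧ Yt' (Q j k - 1) = Y k := by
        intro j k h1j h2j h1k h2k
        by_cases hjk : j ≤ t ∧ k ≤ t
        · have hb := hP j k h1j hjk.1 h1k hjk.2
          have e : Q j k = P j k := by rw [hQ]; unfold npkPext; rw [if_pos hjk]
          have hval := hYtP j k h1j hjk.1 h1k hjk.2
          rw [e]
          exact ⟨hb.1, by omega, by rw [hle _ hb.2]; exact hval.1,
            by rw [hle _ (by omega)]; exact hval.2⟩
        · by_cases hj : j = t+1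
          · by_cases hkt : k = t
            · have e : Q j k = n+2 := by
                rw [hQ]; unfold npkPext
                rw [if_neg (by omega), if_pos (by omega), if_pos hkt]
              rw [e]
              refine ⟨by omega, by omega, ?_, ?_⟩
              · rw [hv (n+2) 2 rfl (by omega), npkNval_two, hj]
              · rw [show n+2-1 = n+1 by omega, hv (n+1) 1 rfl (by omega), npkNval_one, hkt]
            · by_cases hk : k = t+1
              · -- j = k = t+1
                have e : Q j k = n+4*t+5 := by
                  rw [hQ]; unfold npkPext
                  rw [if_neg (by omega), if_neg (by omega), if_neg (by omega)]
                rw [e]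
                refine ⟨by omega, by omega, ?_, ?_⟩
                · rw [show n+4*t+5 = n+(4*t+5) by omega,
                    hv (n+(4*t+5)) (4*t+5) rfl (by omega), npkNval_e, hj]
                · rw [show n+4*t+5-1 = n+(4*t+4) by omega,
                    hv (n+(4*t+4)) (4*t+4) rfl (by omega), npkNval_f t ht, hk]
              · -- j = t+1, 1 ≤ k < t
                have hklt : k < t := by omega
                have e : Q j k = n+3+2*k := by
                  rw [hQ]; unfold npkPext
                  rw [if_neg (by omega), if_pos (by omega), if_neg hkt]
                rw [e]
                refine ⟨by omega, by omega, ?_, ?_⟩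
                · rw [show n+3+2*k = n+(3+2*k) by omega,
                    hv (n+(3+2*k)) (3+2*k) rfl (by omega), npkNval_a t k h1k hklt, hj]
                · rw [show n+3+2*k-1 = n+(2+2*k) by omega,
                    hv (n+(2+2*k)) (2+2*k) rfl (by omega), npkNval_b t k h1k hklt]
          · -- k = t+1, j ≤ t
            have hk : k = t+1 := by omega
            by_cases hjt : j = t
            · have e : Q j k = n+3 := by
                rw [hQ]; unfold npkPext
                rw [if_neg (by omega), if_neg (by omega), if_pos (by omega), if_pos hjt]
              rw [e]
              refine ⟨by omega, by omega, ?_, ?_⟩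
              · rw [hv (n+3) 3 rfl (by omega), npkNval_three, hjt]
              · rw [show n+3-1 = n+2 by omega, hv (n+2) 2 rfl (by omega), npkNval_two, hk]
            · have hjlt : j < t := by omega
              have e : Q j k = n+3+2*t+2*j := by
                rw [hQ]; unfold npkPext
                rw [if_neg (by omega), if_neg (by omega), if_pos (by omega), if_neg hjt]
              rw [e]
              refine ⟨by omega, by omega, ?_, ?_⟩
              · rw [show n+3+2*t+2*j = n+(2*t+3+2*j) by omega,
                  hv (n+(2*t+3+2*j)) (2*t+3+2*j) rfl (by omega), npkNval_c t j h1j hjlt]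
              · rw [show n+3+2*t+2*j-1 = n+(2*t+2+2*j) by omega,
                  hv (n+(2*t+2+2*j)) (2*t+2+2*j) rfl (by omega), npkNval_d t j h1j hjlt, hk]
      refine ⟨Yt', by rw [hle 1 (by omega)]; exact hYt1, ?_, ?_⟩
      · -- stage equations
        intro i hi
        rw [Finset.mem_Icc] at hi
        by_cases hin : i ≤ n
        · dsimp only
          simp only [if_pos hin]
          rw [hle _ hin, hle _ (by omega : i - 1 ≤ n)]
          rw [show (∑ p ∈ Finset.Icc 2 (i-1), A i p • F (Yt' p) (Yt' (p-1)))
              = ∑ p ∈ Finset.Icc 2 (i-1), A i p • F (Yt p) (Yt (p-1)) from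
            Finset.sum_congr rfl fun p hp => by
              rw [Finset.mem_Icc] at hp
              rw [hle _ (by omega), hle _ (by omega)]]
          exact hYtEq i (Finset.mem_Icc.mpr ⟨hi.1, hin⟩)
        · by_cases hi2 : i = n+2
          · subst hi2
            simp only [if_neg hin, eq_self_iff_true, ite_true]
            have hYv2 : Yt' (n+2) = Y (t+1) := by
              rw [hv (n+2) 2 rfl (by omega), npkNval_two]
            have hYv1 : Yt' (n+2-1) = Y t := by
              rw [show n+2-1 = n+1 by omega, hv (n+1) 1 rfl (by omega), npkNval_one]
            rw [hYv2, hYv1]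
            have hz : (∑ j ∈ Finset.Icc 1 t, ∑ k ∈ Finset.Icc 1 t,
                if P j k = n+2 then a (t+1) j k else 0) = 0 := by
              refine Finset.sum_eq_zero fun j hj => Finset.sum_eq_zero fun k hk => ?_
              rw [Finset.mem_Icc] at hj hk
              have := hP j k hj.1 hj.2 hk.1 hk.2
              exact if_neg (by omega)
            rw [hz, zero_add]
            have hsum : (∑ p ∈ Finset.Icc 2 (n+2-1),
                ((∑ j ∈ Finset.Icc 1 t, ∑ k ∈ Finset.Icc 1 t,
                    if P j k = p then a (t+1) j k else 0)
                  + (if p = n+2 then a (t+1) (t+1) t else 0)) • F (Yt' p) (Yt' (p-1)))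
                = ∑ j ∈ Finset.Icc 1 t, ∑ k ∈ Finset.Icc 1 t,
                    a (t+1) j k • F (Y j) (Y k) := by
              have hstep : ∀ p ∈ Finset.Icc 2 (n+2-1),
                  ((∑ j ∈ Finset.Icc 1 t, ∑ k ∈ Finset.Icc 1 t,
                      if P j k = p then a (t+1) j k else 0)
                    + (if p = n+2 then a (t+1) (t+1) t else 0)) • F (Yt' p) (Yt' (p-1))
                  = (∑ j ∈ Finset.Icc 1 t, ∑ k ∈ Finset.Icc 1 t,
                      if P j k = p then a (t+1) j k else 0) • F (Yt' p) (Yt' (p-1)) := by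
                intro p hp
                rw [Finset.mem_Icc] at hp
                rw [if_neg (by omega), add_zero]
              rw [Finset.sum_congr rfl hstep,
                npk_sum_swap_ite _ _ _ _ (fun p => F (Yt' p) (Yt' (p-1))) _
                  (fun j hj k hk => by
                    rw [Finset.mem_Icc] at hj hk ⊢
                    have := hP j k hj.1 hj.2 hk.1 hk.2
                    omega)]
              refine Finset.sum_congr rfl fun j hj => Finset.sum_congr rfl fun k hk => ?_
              rw [Finset.mem_Icc] at hj hk
              have hval := hYtP j k hj.1 hj.2 hk.1 hk.2
              have hb := hP j k hj.1 hj.2 hk.1 hk.2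
              simp only [hle _ hb.2, hle _ (show P j k - 1 ≤ n by omega), hval.1, hval.2]
            rw [hsum]
            have := hY (t+1) (Finset.mem_Icc.mpr ⟨by omega, by omega⟩)
            rw [Nat.add_sub_cancel] at this
            exact this
          · -- copy stage
            simp only [if_neg hin, if_neg hi2]
            have hio : n < i := by omega
            have hvi : Yt' i = Y (npkNval t (i-n)) := hv i (i-n) (by omega) (by omega)
            set u : ℕ := npkNval t (i-n) with hu
            have hu1 : 1 ≤ u := npkNval_pos t (i-n) ht
            have hu2 : u ≤ t+1 := npkNval_le t (i-n) ht
            by_cases hu1' : u ≤ 1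
            · have hzz : ∀ p, npkCcoef a Q u p = 0 := by
                intro p; unfold npkCcoef; rw [if_pos hu1']
              have hYu : Yt' i = yn := by rw [hvi, show u = 1 by omega, hY1]
              rw [hYu]
              simp only [hzz, zero_smul, zero_add, add_zero, Finset.sum_const_zero,
                smul_zero]
            · -- u ≥ 2
              have huu : 2 ≤ u := by omega
              have hus : u ≤ s := by omega
              -- availability of the diagonal pairs
              have hdiag : Q u (u-1) ∈ Finset.Icc 2 (i-1) ∧ Yt' (Q u (u-1)) = Y u
                    ∧ Yt' (Q u (u-1) - 1) = Y (u-1) ∧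
                  Q (u-1) u ∈ Finset.Icc 2 (i-1) ∧ Yt' (Q (u-1) u) = Y (u-1)
                    ∧ Yt' (Q (u-1) u - 1) = Y u := by
                by_cases hut : u ≤ t
                · have e1 : Q u (u-1) = P u (u-1) := by
                    rw [hQ]; unfold npkPext; rw [if_pos (by omega)]
                  have e2 : Q (u-1) u = P (u-1) u := by
                    rw [hQ]; unfold npkPext; rw [if_pos (by omega)]
                  have hb1 := hP u (u-1) (by omega) hut (by omega) (by omega)
                  have hb2 := hP (u-1) u (by omega) (by omega) (by omega) hut
                  have hval1 := hYtP u (u-1) (by omega) hut (by omega) (by omega)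
                  have hval2 := hYtP (u-1) u (by omega) (by omega) (by omega) hut
                  rw [e1, e2]
                  exact ⟨Finset.mem_Icc.mpr ⟨hb1.1, by omega⟩,
                    by rw [hle _ hb1.2]; exact hval1.1,
                    by rw [hle _ (by omega)]; exact hval1.2,
                    Finset.mem_Icc.mpr ⟨hb2.1, by omega⟩,
                    by rw [hle _ hb2.2]; exact hval2.1,
                    by rw [hle _ (by omega)]; exact hval2.2⟩
                · have hut1 : u = t+1 := by omega
                  have hr5 : 5 ≤ i - n := by
                    rcases npkNval_succ_ge t (i-n) ht (by rw [← hu, hut1]) with h' | h'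
                    · omega
                    · exact h'
                  have hq1 := hQb u (u-1) (by omega) (by omega) (by omega) (by omega)
                  have hq2 := hQb (u-1) u (by omega) (by omega) (by omega) (by omega)
                  have e1 : Q u (u-1) = n+2 := by
                    rw [hQ]; unfold npkPext
                    rw [if_neg (by omega), if_pos (by omega), if_pos (by omega)]
                  have e2 : Q (u-1) u = n+3 := by
                    rw [hQ]; unfold npkPext
                    rw [if_neg (by omega), if_neg (by omega), if_pos (by omega),
                      if_pos (by omega)]
                  refine ⟨?_, hq1.2.2.1, hq1.2.2.2, ?_, hq2.2.2.1, hq2.2.2.2⟩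
                  · rw [e1]; exact Finset.mem_Icc.mpr ⟨by omega, by omega⟩
                  · rw [e2]; exact Finset.mem_Icc.mpr ⟨by omega, by omega⟩
              have hAii : npkCcoef a Q u i = 0 := by
                refine npkCcoef_eq_zero a Q u i ?_ ?_ ?_
                · intro j hj k hk
                  rw [Finset.mem_Icc] at hj hk
                  have hb := hP j k hj.1 (by omega) hk.1 (by omega)
                  have e : Q j k = P j k := by
                    rw [hQ]; unfold npkPext; rw [if_pos (by omega)]
                  rw [e]; omega
                · have := Finset.mem_Icc.mp hdiag.1; omega
                · have := Finset.mem_Icc.mp hdiag.2.2.2.1; omega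
              rw [hAii]
              have hsum : (∑ p ∈ Finset.Icc 2 (i-1),
                  npkCcoef a Q u p • F (Yt' p) (Yt' (p-1)))
                  = a u u (u-1) • F (Y u) (Y (u-1)) + a u (u-1) u • F (Y (u-1)) (Y u)
                    + ∑ j ∈ Finset.Icc 1 (u-1), ∑ k ∈ Finset.Icc 1 (u-1),
                        a u j k • F (Y j) (Y k) := by
                rw [npkCcoef_sum a Q u huu (Finset.Icc 2 (i-1))
                  (fun p => F (Yt' p) (Yt' (p-1)))
                  (fun j hj k hk => by
                    rw [Finset.mem_Icc] at hj hk
                    have hb := hP j k hj.1 (by omega) hk.1 (by omega)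
                    have e : Q j k = P j k := by
                      rw [hQ]; unfold npkPext; rw [if_pos (by omega)]
                    rw [Finset.mem_Icc, e]; omega)
                  hdiag.1 hdiag.2.2.2.1]
                simp only [hdiag.2.1, hdiag.2.2.1, hdiag.2.2.2.2.1, hdiag.2.2.2.2.2]
                congr 1
                refine Finset.sum_congr rfl fun j hj => Finset.sum_congr rfl fun k hk => ?_
                rw [Finset.mem_Icc] at hj hk
                have hval := hYtP j k hj.1 (by omega) hk.1 (by omega)
                have hb := hP j k hj.1 (by omega) hk.1 (by omega)
                have e : Q j k = P j k := by
                  rw [hQ]; unfold npkPext; rw [if_pos (by omega)]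
                rw [e, hle _ hb.2, hle _ (show P j k - 1 ≤ n by omega), hval.1, hval.2]
              rw [hsum, hvi]
              have := hY u (Finset.mem_Icc.mpr ⟨huu, hus⟩)
              conv_lhs => rw [this]
              simp only [zero_smul, zero_add]
      · -- pair property
        intro j k h1j h2j h1k h2k
        exact ⟨(hQb j k h1j h2j h1k h2k).2.2.1, (hQb j k h1j h2j h1k h2k).2.2.2⟩
/-- Every `s`-stage diagonally-implicit NPRK method of the form
(eq. nprk-general-imim-imex) can be expressed as an `ŝ`-stage sequentially-coupled NPRK
method (eq. nprk-simple-coupling-imim-imex) with `ŝ ≥ s`, producing the same output. -/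
theorem nprk_expressible_as_sequentially_coupled
    (s : ℕ) (hs : 1 ≤ s)
    (a : ℕ → ℕ → ℕ → ℝ) (b : ℕ → ℕ → ℝ)
    (ha1 : ∀ i ∈ Finset.Icc 1 s, ∀ j ∈ Finset.Icc 1 s, ∀ k ∈ Finset.Icc 1 s,
      (i < j ∨ i < k) → a i j k = 0)
    (ha2 : ∀ i ∈ Finset.Icc 1 s, ∀ k, k ≠ i - 1 → a i i k = 0)
    (ha3 : ∀ i ∈ Finset.Icc 1 s, ∀ j, j ≠ i - 1 → a i j i = 0)
    (ha4 : ∀ i ∈ Finset.Icc 1 s, a i i (i - 1) = 0 ∨ a i (i - 1) i = 0) :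
    ∃ shat : ℕ, s ≤ shat ∧
    ∃ aseq : ℕ → ℕ → ℝ, ∃ aflip : ℕ → ℝ, ∃ bseq : ℕ → ℝ,
      (∀ i ∈ Finset.Icc 2 shat, aseq i i = 0 ∨ aflip i = 0) ∧
      ∀ (d : ℕ) (F : (Fin d → ℝ) → (Fin d → ℝ) → (Fin d → ℝ)) (h : ℝ)
        (yn : Fin d → ℝ) (Y : ℕ → (Fin d → ℝ)),
        Y 1 = yn →
        (∀ i ∈ Finset.Icc 2 s, Y i = yn + h •
          (a i i (i - 1) • F (Y i) (Y (i - 1)) + a i (i - 1) i • F (Y (i - 1)) (Y i) +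
            ∑ j ∈ Finset.Icc 1 (i - 1), ∑ k ∈ Finset.Icc 1 (i - 1),
              a i j k • F (Y j) (Y k))) →
        ∃ Yt : ℕ → (Fin d → ℝ),
          Yt 1 = yn ∧
          (∀ i ∈ Finset.Icc 2 shat, Yt i = yn + h •
            (aseq i i • F (Yt i) (Yt (i - 1)) + aflip i • F (Yt (i - 1)) (Yt i) +
              ∑ j ∈ Finset.Icc 2 (i - 1), aseq i j • F (Yt j) (Yt (j - 1)))) ∧
          yn + h • ∑ i ∈ Finset.Icc 1 s, ∑ j ∈ Finset.Icc 1 s, b i j • F (Y i) (Y j) =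
            yn + h • ∑ i ∈ Finset.Icc 2 shat, bseq i • F (Yt i) (Yt (i - 1)) := by
  obtain ⟨n, A, Af, P, hn, hP, hc, hsem⟩ := npk_aux s a ha4 s hs le_rfl
  refine ⟨n, by omega, A, Af,
    (fun p => ∑ i ∈ Finset.Icc 1 s, ∑ j ∈ Finset.Icc 1 s, if P i j = p then b i j else 0),
    fun i _ => hc i, ?_⟩
  intro d F h yn Y hY1 hY
  obtain ⟨Yt, hYt1, hYtEq, hYtP⟩ := hsem d F h yn Y hY1 hY
  refine ⟨Yt, hYt1, hYtEq, ?_⟩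
  have hkey : (∑ p ∈ Finset.Icc 2 n,
      (∑ i ∈ Finset.Icc 1 s, ∑ j ∈ Finset.Icc 1 s, if P i j = p then b i j else 0)
        • F (Yt p) (Yt (p-1)))
      = ∑ i ∈ Finset.Icc 1 s, ∑ j ∈ Finset.Icc 1 s, b i j • F (Y i) (Y j) := by
    rw [npk_sum_swap_ite (Finset.Icc 1 s) (Finset.Icc 1 s) b P
      (fun p => F (Yt p) (Yt (p-1))) (Finset.Icc 2 n)
      (fun i hi j hj => by
        rw [Finset.mem_Icc] at hi hj ⊢
        have := hP i j hi.1 hi.2 hj.1 hj.2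
        omega)]
    refine Finset.sum_congr rfl fun i hi => Finset.sum_congr rfl fun j hj => ?_
    rw [Finset.mem_Icc] at hi hj
    have := hYtP i j hi.1 hi.2 hj.1 hj.2
    simp only [this.1, this.2]
  rw [hkey]
end

section
/- Let s ≥ 2 and let (a_{i,j,j−1}) for 2 ≤ j ≤ i ≤ s and (b_{i,i−1}) for 2 ≤ i ≤ s be real coefficients of an s-stage sequentially-coupled NPRK method. Define PRK coefficients, for 1 ≤ i, j ≤ s − 1: a_{ij} := a_{i+1,j+1,j}, â_{ij} := a_{i,j+1,j}, and b_i = b̂_i := b_{i+1,i}. Then for every dimension d, every F : ℝ^d × ℝ^d → ℝ^d, every h ∈ ℝ, every y_n ∈ ℝ^d, and every tuple (Y₁, …, Y_s) with Y₁ = y_n and Y_i = y_n + h Σ_{j=2}^{i} a_{i,j,j−1}F(Y_j,Y_{j−1}) for i = 2,…,s, the values Z_i := Y_{i+1} and W_i := Y_i (for i = 1,…,s−1) satisfy the partitioned Runge–Kutta stage equations Z_i = y_n + h Σ_{j=1}^{s−1} a_{ij}F(Z_j,W_j) and W_i = y_n + h Σ_{j=1}^{s−1} â_{ij}F(Z_j,W_j)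 for the partitioned system z' = F(z,w), w' = F(z,w) with z_n = w_n = y_n, and the PRK output y_n + h Σ_{i=1}^{s−1} b_i F(Z_i,W_i) equals the NPRK output y_n + h Σ_{i=2}^{s} b_{i,i−1}F(Y_i,Y_{i−1}). -/
lemma nprk_reindex {M : Type*} [AddCommMonoid M] (s : ℕ) (hs : 2 ≤ s) (g : ℕ → M) :
    ∑ j ∈ Finset.Icc 1 (s - 1), g (j + 1) = ∑ j ∈ Finset.Icc 2 s, g j := by
  have : Finset.Icc 2 s = (Finset.Icc 1 (s - 1)).map (addRightEmbedding 1) := by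
    rw [Finset.map_add_right_Icc]
    congr 1
    omega
  rw [this, Finset.sum_map]
  rfl

/-- An `s`-stage sequentially-coupled NPRK method can be expressed as an
`(s−1)`-stage partitioned Runge–Kutta method with coefficients
`a_{ij} = a_{i+1,j+1,j}`, `â_{ij} = a_{i,j+1,j}`, `b_i = b̂_i = b_{i+1,i}` applied to
the partitioned system `z' = F(z,w)`, `w' = F(z,w)` with `z_n = w_n = y_n`, via
`Z_i = Y_{i+1}`, `W_i = Y_i`, and both methods produce the same output. -/
theorem sequentially_coupled_nprk_is_prk
    (s : ℕ) (hs : 2 ≤ s)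
    (a : ℕ → ℕ → ℝ) (b : ℕ → ℝ)
    (ha0 : ∀ i j : ℕ, i < j → a i j = 0)
    (d : ℕ) (F : (Fin d → ℝ) → (Fin d → ℝ) → (Fin d → ℝ)) (h : ℝ)
    (yn : Fin d → ℝ) (Y : ℕ → (Fin d → ℝ))
    (hY1 : Y 1 = yn)
    (hY : ∀ i ∈ Finset.Icc 2 s,
      Y i = yn + h • ∑ j ∈ Finset.Icc 2 i, a i j • F (Y j) (Y (j - 1))) :
    (∀ i ∈ Finset.Icc 1 (s - 1), Y (i + 1) = yn + h •
      ∑ j ∈ Finset.Icc 1 (s - 1), a (i + 1) (j + 1) • F (Y (j + 1)) (Y j)) ∧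
    (∀ i ∈ Finset.Icc 1 (s - 1), Y i = yn + h •
      ∑ j ∈ Finset.Icc 1 (s - 1), a i (j + 1) • F (Y (j + 1)) (Y j)) ∧
    (yn + h • ∑ i ∈ Finset.Icc 1 (s - 1), b (i + 1) • F (Y (i + 1)) (Y i) =
      yn + h • ∑ i ∈ Finset.Icc 2 s, b i • F (Y i) (Y (i - 1))) := by
  -- key: for any i ≤ s, the full PRK-style sum equals the truncated NPRK sum
  have key : ∀ i, i ≤ s →
      ∑ j ∈ Finset.Icc 1 (s - 1), a i (j + 1) • F (Y (j + 1)) (Y j) =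
      ∑ j ∈ Finset.Icc 2 i, a i j • F (Y j) (Y (j - 1)) := by
    intro i hi
    have h1 : ∑ j ∈ Finset.Icc 1 (s - 1), a i (j + 1) • F (Y (j + 1)) (Y j) =
        ∑ j ∈ Finset.Icc 2 s, a i j • F (Y j) (Y (j - 1)) := by
      rw [← nprk_reindex s hs (fun j => a i j • F (Y j) (Y (j - 1)))]
      apply Finset.sum_congr rfl
      intro j hj
      simp
    rw [h1]
    symm
    apply Finset.sum_subset
    · apply Finset.Icc_subset_Icc_right hi
    · intro j hj hj'
      simp only [Finset.mem_Icc] at hj hj'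
      have : i < j := by omega
      rw [ha0 i j this, zero_smul]
  refine ⟨?_, ?_, ?_⟩
  · intro i hi
    simp only [Finset.mem_Icc] at hi
    rw [key (i + 1) (by omega)]
    exact hY (i + 1) (by simp only [Finset.mem_Icc]; omega)
  · intro i hi
    simp only [Finset.mem_Icc] at hi
    rw [key i (by omega)]
    rcases Nat.lt_or_ge i 2 with h2 | h2
    · have hi1 : i = 1 := by omega
      subst hi1
      simp [hY1]
    · exact hY i (by simp only [Finset.mem_Icc]; omega)
  · congr 1
    rw [← nprk_reindex s hs (fun i => b i • F (Y i) (Y (i - 1)))]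
    simp
end

section
/- Let s ≥ 1, let (a_{ijk}) for 1 ≤ i,j,k ≤ s and (b_{ij}) for 1 ≤ i,j ≤ s be real coefficients, let d ∈ ℕ, G¹, G² : ℝ^d → ℝ^d, h ∈ ℝ, and y_n ∈ ℝ^d, and define F(u,v) := G¹(u) + G²(v). Define a¹_{ij} := Σ_k a_{ijk}, b¹_i := Σ_j b_{ij}, a²_{ik} := Σ_j a_{ijk}, and b²_j := Σ_i b_{ij}. Then a tuple (Y₁,…,Y_s) satisfies the NPRK stage equations Y_i = y_n + h Σ_{j,k} a_{ijk}F(Y_j,Y_k) if and only if it satisfies the additive Runge–Kutta stage equations Y_i = y_n + h Σ_j [a¹_{ij}G¹(Y_j) + a²_{ij}G²(Y_j)]; and in that case the NPRK output y_n + h Σ_{i,j} b_{ij}F(Y_i,Y_j) equals the ARK output y_n + h Σ_i [b¹_i G¹(Y_i) + b²_i G²(Y_i)]. That is, on additively partitioned right-hand sides an NPRK method reduces to its underlying ARK method with shared abscissae. -/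
lemma key_sum (s : ℕ) (c : ℕ → ℕ → ℝ) (d : ℕ) (P Q : ℕ → (Fin d → ℝ)) :
    ∑ j ∈ Finset.Icc 1 s, ∑ k ∈ Finset.Icc 1 s, c j k • (P j + Q k) =
    ∑ j ∈ Finset.Icc 1 s,
      ((∑ k ∈ Finset.Icc 1 s, c j k) • P j + (∑ k ∈ Finset.Icc 1 s, c k j) • Q j) := by
  simp only [smul_add, Finset.sum_add_distrib, Finset.sum_smul]
  congr 1
  exact Finset.sum_comm ..

/-- On an additively partitioned right-hand side `F(u,v) = G¹(u) + G²(v)`, an NPRK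
method reduces to its underlying additive Runge–Kutta method with coefficients
`a¹_{ij} = Σ_k a_{ijk}`, `b¹_i = Σ_j b_{ij}`, `a²_{ik} = Σ_j a_{ijk}`,
`b²_j = Σ_i b_{ij}`: the stage equations are equivalent and the outputs agree. -/
theorem nprk_reduces_to_ark_on_additive_partition
    (s : ℕ) (hs : 1 ≤ s)
    (a : ℕ → ℕ → ℕ → ℝ) (b : ℕ → ℕ → ℝ)
    (d : ℕ) (G₁ G₂ : (Fin d → ℝ) → (Fin d → ℝ)) (h : ℝ) (yn : Fin d → ℝ)
    (Y : ℕ → (Fin d → ℝ)) :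
    ((∀ i ∈ Finset.Icc 1 s, Y i = yn + h • ∑ j ∈ Finset.Icc 1 s,
        ∑ k ∈ Finset.Icc 1 s, a i j k • (fun u v => G₁ u + G₂ v) (Y j) (Y k)) ↔
      (∀ i ∈ Finset.Icc 1 s, Y i = yn + h • ∑ j ∈ Finset.Icc 1 s,
        ((∑ k ∈ Finset.Icc 1 s, a i j k) • G₁ (Y j) +
          (∑ k ∈ Finset.Icc 1 s, a i k j) • G₂ (Y j)))) ∧
    ((∀ i ∈ Finset.Icc 1 s, Y i = yn + h • ∑ j ∈ Finset.Icc 1 s,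
        ∑ k ∈ Finset.Icc 1 s, a i j k • (fun u v => G₁ u + G₂ v) (Y j) (Y k)) →
      yn + h • ∑ i ∈ Finset.Icc 1 s, ∑ j ∈ Finset.Icc 1 s,
          b i j • (fun u v => G₁ u + G₂ v) (Y i) (Y j) =
        yn + h • ∑ i ∈ Finset.Icc 1 s,
          ((∑ j ∈ Finset.Icc 1 s, b i j) • G₁ (Y i) +
            (∑ j ∈ Finset.Icc 1 s, b j i) • G₂ (Y i))) := by
  constructor
  · constructor
    · intro H i hi
      rw [H i hi, ← key_sum s (fun j k => a i j k) d (fun j => G₁ (Y j)) (fun k => G₂ (Y k))]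
    · intro H i hi
      rw [H i hi, key_sum s (fun j k => a i j k) d (fun j => G₁ (Y j)) (fun k => G₂ (Y k))]
  · intro _
    rw [key_sum s b d (fun i => G₁ (Y i)) (fun j => G₂ (Y j))]
end
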